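/- For all integers n and m with 0 ≤ m < n/2, one has Σ_{i=0}^{m} C(n,i) ≤ ((n-m)/(n-2m))·C(n,m). -/

import Mathlib

open Finset

/-- for all integers `n`, `m` with `0 ≤ m < n/2`,
`Σ_{i=0}^{m} C(n,i) ≤ ((n-m)/(n-2m))·C(n,m)`. -/
theorem stmt15 (n m : ℕ) (h : 2 * m < n) :
    (∑ i ∈ Finset.range (m + 1), (n.choose i : ℝ)) ≤
      (((n : ℝ) - m) / ((n : ℝ) - 2 * m)) * (n.choose m : ℝ) := by
  have hmn : m < n := by omega
  have hN2M : (0:ℝ) < (n:ℝ) - 2*m := by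
    have h' : (2*m+1 : ℕ) ≤ n := h
    have := (Nat.cast_le (α := ℝ)).mpr h'
    push_cast at this; linarith
  have hm0 : (0:ℝ) ≤ (m:ℝ) := by positivity
  have hNM : (0:ℝ) < (n:ℝ) - m := by linarith
  set r : ℝ := (m:ℝ) / ((n:ℝ) - m) with hr
  have hr0 : 0 ≤ r := by positivity
  have hr1 : r < 1 := by
    rw [hr, div_lt_one hNM]; linarith
  have key : ∀ j, j ≤ m → (n.choose (m - j) : ℝ) ≤ r ^ j * n.choose m := by
    intro j
    induction j with
    | zero => intro _; simp
    | succ j ih =>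
      intro hjm
      have hj : j ≤ m := by omega
      have ihj := ih hj
      set a := m - (j+1) with ha
      have haj : m - j = a + 1 := by omega
      have hid := Nat.choose_succ_right_eq n a
      have han : a ≤ n := by omega
      have ham : a + 1 ≤ m := by omega
      have hidR : (n.choose a : ℝ) * ((n:ℝ) - a) = (n.choose (a+1) : ℝ) * ((a:ℝ)+1) := by
        have := congrArg (Nat.cast : ℕ → ℝ) hid
        push_cast [Nat.cast_sub han] at this
        linarith
      have h3 : (a:ℝ) + 1 ≤ (m:ℝ) := by exact_mod_cast ham
      have hstep : (n.choose a : ℝ) * ((n:ℝ) - m) ≤ (m:ℝ) * (n.choose (a+1) : ℝ) := by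
        have h1 : (0:ℝ) ≤ (n.choose a : ℝ) := by positivity
        have h2 : (0:ℝ) ≤ (n.choose (a+1) : ℝ) := by positivity
        nlinarith
      have hstep' : (n.choose a : ℝ) ≤ r * (n.choose (a+1) : ℝ) := by
        rw [hr, div_mul_eq_mul_div, le_div_iff₀ hNM]
        linarith
      calc (n.choose (m - (j+1)) : ℝ) = (n.choose a : ℝ) := by rw [ha]
        _ ≤ r * (n.choose (a+1) : ℝ) := hstep'
        _ = r * (n.choose (m - j) : ℝ) := by rw [haj]
        _ ≤ r * (r ^ j * n.choose m) := mul_le_mul_of_nonneg_left ihj hr0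
        _ = r ^ (j+1) * n.choose m := by ring
  have hsum : (∑ i ∈ Finset.range (m + 1), (n.choose i : ℝ))
      = ∑ j ∈ Finset.range (m+1), (n.choose (m - j) : ℝ) := by
    rw [← Finset.sum_range_reflect]
    simp
  rw [hsum]
  have h1 : ∑ j ∈ Finset.range (m+1), (n.choose (m - j) : ℝ)
      ≤ ∑ j ∈ Finset.range (m+1), r ^ j * n.choose m := by
    apply Finset.sum_le_sum
    intro j hj
    exact key j (Nat.lt_succ_iff.mp (Finset.mem_range.mp hj))
  have h3 : (∑ j ∈ Finset.range (m+1), r ^ j) ≤ 1 / (1 - r) := by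
    have hg := geom_sum_mul r (m+1)
    rw [le_div_iff₀ (by linarith : (0:ℝ) < 1 - r)]
    nlinarith [pow_nonneg hr0 (m+1)]
  have h4 : 1 / (1 - r) = ((n:ℝ) - m) / ((n:ℝ) - 2*m) := by
    have he : 1 - r = ((n:ℝ) - 2*m) / ((n:ℝ) - m) := by
      rw [hr]; field_simp; ring
    rw [he, one_div_div]
  calc ∑ j ∈ Finset.range (m+1), (n.choose (m - j) : ℝ)
      ≤ ∑ j ∈ Finset.range (m+1), r ^ j * (n.choose m : ℝ) := h1
    _ = (∑ j ∈ Finset.range (m+1), r ^ j) * n.choose m := by rw [Finset.sum_mul]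
    _ ≤ (1/(1-r)) * n.choose m := mul_le_mul_of_nonneg_right h3 (by positivity)
    _ = _ := by rw [h4]
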